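/- Let ν be a σ-principal σ-maxitive measure on a σ-algebra 𝓑. Then ν is autocontinuous (ν ⋘ ν). Moreover, if the empty set is the only ν-negligible subset of E, then ν is completely maxitive and has a 𝓑-measurable cardinal density, i.e. there is a 𝓑-measurable c : E → [0,∞] with ν(B) = sup_{x∈B} c(x) for all B ∈ 𝓑. -/

import Mathlib

open scoped ENNReal
open Set Filter MeasureTheory

variable {E : Type*}

/-- `f : E → [0,∞]` is `𝓑`-measurable: `{f > t}` is measurable for every `t`. -/
def Premeasurable [MeasurableSpace E] (f : E → ℝ≥0∞) : Prop :=
  ∀ t : ℝ≥0∞, MeasurableSet {x | t < f x}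

/-- A maxitive measure on the σ-algebra of measurable subsets of `E`. -/
def Maxitive [MeasurableSpace E] (ν : Set E → ℝ≥0∞) : Prop :=
  ν ∅ = 0 ∧ ∀ A B : Set E, MeasurableSet A → MeasurableSet B →
    ν (A ∪ B) = max (ν A) (ν B)

/-- A σ-maxitive measure: a maxitive measure commuting with countable nondecreasing unions. -/
def SigmaMaxitive [MeasurableSpace E] (ν : Set E → ℝ≥0∞) : Prop :=
  Maxitive ν ∧ ∀ B : ℕ → Set E, (∀ n, MeasurableSet (B n)) → Monotone B →
    ν (⋃ n, B n) = ⨆ n, ν (B n)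

/-- `N` is `τ`-negligible: it is contained in a measurable set of `τ`-measure zero. -/
def Negligible [MeasurableSpace E] (τ : Set E → ℝ≥0∞) (N : Set E) : Prop :=
  ∃ B : Set E, MeasurableSet B ∧ N ⊆ B ∧ τ B = 0

/-- The `τ`-essential supremum of `f` over `B`: `inf { t > 0 : B ∩ {f > t} is τ-negligible }`. -/
noncomputable def essSupOn [MeasurableSpace E] (τ : Set E → ℝ≥0∞) (f : E → ℝ≥0∞)
    (B : Set E) : ℝ≥0∞ :=
  sInf {t : ℝ≥0∞ | 0 < t ∧ Negligible τ (B ∩ {x | t < f x})}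

/-- `ν ≪ τ`: absolute continuity. -/
def AbsCont [MeasurableSpace E] (ν τ : Set E → ℝ≥0∞) : Prop :=
  ∀ B : Set E, MeasurableSet B → τ B = 0 → ν B = 0

/-- `ν ⋘ τ`: strong absolute continuity, i.e. `ν` has a measurable relative density
with respect to `τ`. -/
def StrongAbsCont [MeasurableSpace E] (ν τ : Set E → ℝ≥0∞) : Prop :=
  ∃ f : E → ℝ≥0∞, Premeasurable f ∧ ∀ B : Set E, MeasurableSet B → ν B = essSupOn τ f B

/-- `c` is a cardinal density of `ν`: `ν B = sup_{x ∈ B} c x` for every measurable `B`. -/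
def IsCardinalDensity [MeasurableSpace E] (ν : Set E → ℝ≥0∞) (c : E → ℝ≥0∞) : Prop :=
  ∀ B : Set E, MeasurableSet B → ν B = ⨆ x ∈ B, c x

/-- `τ` is essential: there exists a σ-finite σ-additive measure `m` with the same
null measurable sets. -/
def Essential [MeasurableSpace E] (τ : Set E → ℝ≥0∞) : Prop :=
  ∃ m : Measure E, SigmaFinite m ∧ ∀ B : Set E, MeasurableSet B → (0 < τ B ↔ 0 < m B)

/-- A σ-ideal of the σ-algebra of measurable sets. -/
def SigmaIdeal [MeasurableSpace E] (I : Set (Set E)) : Prop :=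
  I.Nonempty ∧ (∀ S ∈ I, MeasurableSet S) ∧
  (∀ f : ℕ → Set E, (∀ n, f n ∈ I) → (⋃ n, f n) ∈ I) ∧
  (∀ B S : Set E, MeasurableSet B → S ∈ I → B ⊆ S → B ∈ I)

/-- `τ` is σ-principal: every σ-ideal has a greatest element modulo `τ`-negligible sets. -/
def SigmaPrincipal [MeasurableSpace E] (τ : Set E → ℝ≥0∞) : Prop :=
  ∀ I : Set (Set E), SigmaIdeal I → ∃ L ∈ I, ∀ S ∈ I, Negligible τ (S \ L)

/-- A pseudo-multiplication on `[0,∞]`. -/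
structure PseudoMul where
  op : ℝ≥0∞ → ℝ≥0∞ → ℝ≥0∞
  assoc : ∀ a b c, op (op a b) c = op a (op b c)
  contOn : ContinuousOn (fun q : ℝ≥0∞ × ℝ≥0∞ => op q.1 q.2) (Set.Ioo 0 ⊤ ×ˢ Set.univ)
  contLeft : ∀ t, ContinuousOn (fun s => op s t) (Set.Ioi 0)
  monoLeft : ∀ t, Monotone fun s => op s t
  monoRight : ∀ s, Monotone (op s)
  one : ℝ≥0∞
  one_op : ∀ t, op one t = t
  eq_zero : ∀ s t, op s t = 0 → s = 0 ∨ t = 0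
  zero_op : ∀ t, op 0 t = 0
  op_zero : ∀ t, op t 0 = 0

/-- `t` is `⊙`-finite: `inf_{s > 0} s ⊙ t = 0`. -/
def OdotFinite (p : PseudoMul) (t : ℝ≥0∞) : Prop :=
  (⨅ s ∈ Set.Ioi (0 : ℝ≥0∞), p.op s t) = 0

/-- The idempotent `⊙`-integral `∫_B f ⊙ dτ = sup_{t ∈ [0,∞)} t ⊙ τ (B ∩ {f > t})`. -/
noncomputable def iInt [MeasurableSpace E] (p : PseudoMul) (τ : Set E → ℝ≥0∞)
    (f : E → ℝ≥0∞) (B : Set E) : ℝ≥0∞ :=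
  ⨆ t ∈ Set.Iio (⊤ : ℝ≥0∞), p.op t (τ (B ∩ {x | t < f x}))

/-- `ν ≪_⊙ τ`: `ν B ≤ ∞ ⊙ τ B` for every measurable `B`. -/
def OdotAbsCont [MeasurableSpace E] (p : PseudoMul) (ν τ : Set E → ℝ≥0∞) : Prop :=
  ∀ B : Set E, MeasurableSet B → ν B ≤ p.op ⊤ (τ B)

/-- `ν` is semi-`⊙`-finite. -/
def SemiOdotFinite [MeasurableSpace E] (p : PseudoMul) (ν : Set E → ℝ≥0∞) : Prop :=
  ∀ B : Set E, MeasurableSet B →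
    ν B = ⨆ A ∈ {A : Set E | MeasurableSet A ∧ A ⊆ B ∧ OdotFinite p (ν A)}, ν A

/-- `τ` is σ-`⊙`-finite. -/
def SigmaOdotFinite [MeasurableSpace E] (p : PseudoMul) (τ : Set E → ℝ≥0∞) : Prop :=
  ∃ B : ℕ → Set E, (∀ n, MeasurableSet (B n)) ∧ (⋃ n, B n) = Set.univ ∧
    ∀ n, OdotFinite p (τ (B n))

/-- Continuity from below. -/
def ContFromBelow [MeasurableSpace E] (ν : Set E → ℝ≥0∞) : Prop :=
  ∀ B : ℕ → Set E, (∀ n, MeasurableSet (B n)) → Monotone B →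
    Tendsto (fun n => ν (B n)) atTop (nhds (ν (⋃ n, B n)))

/-- Continuity from above (no finiteness assumption). -/
def ContFromAbove [MeasurableSpace E] (ν : Set E → ℝ≥0∞) : Prop :=
  ∀ B : ℕ → Set E, (∀ n, MeasurableSet (B n)) → Antitone B →
    Tendsto (fun n => ν (B n)) atTop (nhds (ν (⋂ n, B n)))

/-- An optimal measure: a maxitive measure continuous from below and from above. -/
def Optimal [MeasurableSpace E] (ν : Set E → ℝ≥0∞) : Prop :=
  Maxitive ν ∧ ContFromBelow ν ∧ ContFromAbove ν

/-- `ν` is completely maxitive: it commutes with arbitrary unions of measurable sets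
whose union is measurable. -/
def CompletelyMaxitive [MeasurableSpace E] (ν : Set E → ℝ≥0∞) : Prop :=
  ∀ S : Set (Set E), (∀ A ∈ S, MeasurableSet A) → MeasurableSet (⋃₀ S) →
    ν (⋃₀ S) = ⨆ A ∈ S, ν A


section AuxPoncet
variable [MeasurableSpace E]

lemma maxitive_mono' {ν : Set E → ℝ≥0∞} (h : Maxitive ν) {A B : Set E}
    (hA : MeasurableSet A) (hB : MeasurableSet B) (hAB : A ⊆ B) : ν A ≤ ν B := by
  have h2 := h.2 A B hA hB
  rw [Set.union_eq_self_of_subset_left hAB] at h2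
  rw [h2]; exact le_max_left _ _

lemma sigmaMaxitive_iUnion' {ν : Set E → ℝ≥0∞} (h : SigmaMaxitive ν) (B : ℕ → Set E)
    (hB : ∀ n, MeasurableSet (B n)) : ν (⋃ n, B n) = ⨆ n, ν (B n) := by
  set C : ℕ → Set E := fun n => ⋃ i, ⋃ (_ : i < n), B i with hCdef
  have hCm : ∀ n, MeasurableSet (C n) :=
    fun n => MeasurableSet.iUnion fun i => MeasurableSet.iUnion fun _ => hB i
  have hCmono : Monotone C := by
    intro m n hmn x hx
    obtain ⟨i, hi, hxi⟩ := Set.mem_iUnion₂.mp hx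
    exact Set.mem_iUnion₂.mpr ⟨i, lt_of_lt_of_le hi hmn, hxi⟩
  have hUnion : (⋃ n, C n) = ⋃ n, B n := by
    apply Set.Subset.antisymm
    · exact Set.iUnion_subset fun n => Set.iUnion₂_subset fun i _ => Set.subset_iUnion B i
    · intro x hx
      obtain ⟨i, hi⟩ := Set.mem_iUnion.mp hx
      exact Set.mem_iUnion.mpr ⟨i + 1,
        Set.mem_iUnion₂.mpr ⟨i, Nat.lt_succ_self i, hi⟩⟩
  have hCle : ∀ n, ν (C n) ≤ ⨆ i, ν (B i) := by
    intro n
    induction n with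
    | zero => simp only [hCdef, Nat.not_lt_zero, Set.iUnion_false, Set.iUnion_empty]
              rw [h.1.1]; exact zero_le
    | succ n ih =>
        have hstep : C (n + 1) = C n ∪ B n := Set.biUnion_lt_succ B n
        rw [hstep, h.1.2 _ _ (hCm n) (hB n)]
        exact max_le ih (le_iSup (fun i => ν (B i)) n)
  apply le_antisymm
  · rw [← hUnion, h.2 C hCm hCmono]
    exact iSup_le hCle
  · exact iSup_le fun n => maxitive_mono' h.1 (hB n) (MeasurableSet.iUnion hB)
      (Set.subset_iUnion B n)

end AuxPoncet

/-- A σ-principal σ-maxitive measure is autocontinuous; if moreover the empty set is its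
only negligible subset, it is completely maxitive and has a measurable cardinal density. -/
theorem sigmaPrincipal_autocontinuous_completelyMaxitive [MeasurableSpace E]
    (ν : Set E → ℝ≥0∞) (hν : SigmaMaxitive ν) (hprin : SigmaPrincipal ν) :
    StrongAbsCont ν ν ∧
    ((∀ N : Set E, Negligible ν N → N = ∅) →
      CompletelyMaxitive ν ∧ ∃ c : E → ℝ≥0∞, Premeasurable c ∧ IsCardinalDensity ν c) := by
  classical
  obtain ⟨D, Dcnt, Ddense⟩ := TopologicalSpace.exists_countable_dense ℝ≥0∞
  obtain ⟨d, hd⟩ := Dcnt.exists_eq_range Ddense.nonempty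
  have hbtwn : ∀ a b : ℝ≥0∞, a < b → ∃ m, a < d m ∧ d m < b := by
    intro a b hab
    obtain ⟨c, hcD, hc⟩ := Ddense.exists_between hab
    rw [hd] at hcD
    obtain ⟨m, rfl⟩ := hcD
    exact ⟨m, hc.1, hc.2⟩
  have hle : ∀ a b : ℝ≥0∞, (∀ m, b < d m → a ≤ d m) → a ≤ b := by
    intro a b h
    by_contra hc
    push_neg at hc
    obtain ⟨m, h1, h2⟩ := hbtwn b a hc
    exact absurd (h m h1) (not_le.mpr h2)
  -- the σ-ideals and their σ-principal maximal elements
  have hideal : ∀ n : ℕ, SigmaIdeal {B : Set E | MeasurableSet B ∧ ν B ≤ d n} := by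
    intro n
    refine ⟨⟨∅, MeasurableSet.empty, by rw [hν.1.1]; exact zero_le⟩,
      fun S hS => hS.1, ?_, ?_⟩
    · intro g hg
      refine ⟨MeasurableSet.iUnion fun k => (hg k).1, ?_⟩
      rw [sigmaMaxitive_iUnion' hν g (fun k => (hg k).1)]
      exact iSup_le fun k => (hg k).2
    · intro B S hBm hS hBS
      exact ⟨hBm, le_trans (maxitive_mono' hν.1 hBm hS.1 hBS) hS.2⟩
  choose L hLmem hLmax using fun n => hprin _ (hideal n)
  have hLm : ∀ n, MeasurableSet (L n) := fun n => (hLmem n).1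
  have hLν : ∀ n, ν (L n) ≤ d n := fun n => (hLmem n).2
  -- the density
  set f : E → ℝ≥0∞ := fun x => ⨅ (n) (_ : x ∈ L n), d n with hfdef
  have hfle : ∀ n x, x ∈ L n → f x ≤ d n := fun n x hx => iInf₂_le n hx
  have hflt : ∀ x r, f x < r → ∃ n, d n < r ∧ x ∈ L n := by
    intro x r h
    simp only [hfdef, iInf_lt_iff] at h
    obtain ⟨n, hxn, hdn⟩ := h
    exact ⟨n, hdn, hxn⟩
  have hSle : ∀ t : ℝ≥0∞, ∀ m, t < d m →
      {x | f x ≤ t} ⊆ ⋃ (n) (_ : d n < d m), L n := by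
    intro t m hm x hx
    obtain ⟨n, h1, h2⟩ := hflt x (d m) (lt_of_le_of_lt hx hm)
    exact Set.mem_iUnion₂.mpr ⟨n, h1, h2⟩
  have hUm : ∀ m, MeasurableSet (⋃ (n) (_ : d n < d m), L n) :=
    fun m => MeasurableSet.iUnion fun n => MeasurableSet.iUnion fun _ => hLm n
  have hUν : ∀ r : ℝ≥0∞, ν (⋃ (n) (_ : d n < r), L n) ≤ r := by
    intro r
    rw [sigmaMaxitive_iUnion' hν _ (fun n => MeasurableSet.iUnion fun _ => hLm n)]
    refine iSup_le fun n => ?_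
    by_cases h : d n < r
    · rw [Set.iUnion_eq_if, if_pos h]
      exact le_trans (hLν n) h.le
    · rw [Set.iUnion_eq_if, if_neg h, hν.1.1]
      exact zero_le
  have hSet : ∀ t : ℝ≥0∞, {x | f x ≤ t} =
      ⋂ (m) (_ : t < d m), ⋃ (n) (_ : d n < d m), L n := by
    intro t
    apply Set.Subset.antisymm
    · intro x hx
      exact Set.mem_iInter₂.mpr fun m hm => hSle t m hm hx
    · intro x hx
      by_contra h
      have ht : t < f x := not_le.mp h
      obtain ⟨m, hm1, hm2⟩ := hbtwn t (f x) ht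
      have := Set.mem_iInter₂.mp hx m hm1
      obtain ⟨n, hn1, hn2⟩ := Set.mem_iUnion₂.mp this
      exact absurd (hfle n x hn2) (not_le.mpr (lt_trans hn1 hm2))
  have hFm : ∀ t : ℝ≥0∞, MeasurableSet {x | f x ≤ t} := by
    intro t
    rw [hSet t]
    exact MeasurableSet.iInter fun m => MeasurableSet.iInter fun _ => hUm m
  have hmeasf : Premeasurable f := by
    intro t
    have : {x | t < f x} = {x | f x ≤ t}ᶜ := by
      ext x; simp [not_le]
    rw [this]
    exact (hFm t).compl
  have hnuf : ∀ t : ℝ≥0∞, ν {x | f x ≤ t} ≤ t := by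
    intro t
    refine hle _ t fun m hm => ?_
    exact le_trans (maxitive_mono' hν.1 (hFm t) (hUm m) (hSle t m hm)) (hUν (d m))
  -- Part 1: strong absolute continuity
  have part1 : StrongAbsCont ν ν := by
    refine ⟨f, hmeasf, fun B hB => ?_⟩
    apply le_antisymm
    · refine le_sInf fun t ht => ?_
      obtain ⟨ht0, N, hNm, hNsub, hN0⟩ := ht
      have hBsub : B ⊆ (B ∩ {x | f x ≤ t}) ∪ N := by
        intro x hx
        by_cases h : f x ≤ t
        · exact Or.inl ⟨hx, h⟩
        · exact Or.inr (hNsub ⟨hx, not_le.mp h⟩)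
      calc ν B ≤ ν ((B ∩ {x | f x ≤ t}) ∪ N) :=
            maxitive_mono' hν.1 hB ((hB.inter (hFm t)).union hNm) hBsub
        _ = max (ν (B ∩ {x | f x ≤ t})) (ν N) := hν.1.2 _ _ (hB.inter (hFm t)) hNm
        _ = ν (B ∩ {x | f x ≤ t}) := by rw [hN0, max_eq_left (zero_le)]
        _ ≤ ν {x | f x ≤ t} :=
            maxitive_mono' hν.1 (hB.inter (hFm t)) (hFm t) Set.inter_subset_right
        _ ≤ t := hnuf t
    · refine hle _ (ν B) fun m hm => ?_
      obtain ⟨N, hNm, hNsub, hN0⟩ := hLmax m B ⟨hB, hm.le⟩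
      refine sInf_le ⟨lt_of_le_of_lt (zero_le) hm, N, hNm, ?_, hN0⟩
      intro x hx
      refine hNsub ⟨hx.1, fun hxL => ?_⟩
      exact absurd (hfle m x hxL) (not_le.mpr hx.2)
  refine ⟨part1, fun hneg => ?_⟩
  -- Part 2
  have hmaxL : ∀ n (S : Set E), MeasurableSet S → ν S ≤ d n → S ⊆ L n := by
    intro n S h1 h2
    exact Set.diff_eq_empty.mp (hneg _ (hLmax n S ⟨h1, h2⟩))
  constructor
  · intro S hSm hSU
    apply le_antisymm
    · refine hle _ _ fun m hm => ?_
      have hsub : ⋃₀ S ⊆ L m := by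
        refine Set.sUnion_subset fun A hA => hmaxL m A (hSm A hA) ?_
        exact le_trans (le_iSup₂ (f := fun A (_ : A ∈ S) => ν A) A hA) hm.le
      exact le_trans (maxitive_mono' hν.1 hSU (hLm m) hsub) (hLν m)
    · exact iSup₂_le fun A hA =>
        maxitive_mono' hν.1 (hSm A hA) hSU (Set.subset_sUnion_of_mem hA)
  · refine ⟨f, hmeasf, fun B hB => ?_⟩
    apply le_antisymm
    · have hBsub : B ⊆ {x | f x ≤ ⨆ x ∈ B, f x} :=
        fun x hx => le_iSup₂ (f := fun x (_ : x ∈ B) => f x) x hx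
      exact le_trans (maxitive_mono' hν.1 hB (hFm _) hBsub) (hnuf _)
    · refine iSup₂_le fun x hx => hle _ _ fun m hm => ?_
      exact hfle m x (hmaxL m B hB hm.le hx)
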